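/- Let C = C_{b,D} with 0 ∈ D, 2 ≤ |D| < b, increasing enumeration (k_n), and let s be the largest common difference of a progression containing D. If q satisfies gcd(q, b) = 1, then (k_n mod q) is asymptotically uniformly distributed on ℤ_q if and only if gcd(q, s) = 1. -/

import Mathlib

set_option linter.unusedSectionVars false
set_option linter.unusedVariables false
set_option maxHeartbeats 1000000

namespace Cantor13


/-- Numbers `< b^j` all of whose base-`b` digits lie in `D`. -/
def CF (b : ℕ) (D : Finset ℕ) (j : ℕ) : Finset ℕ :=
  (Finset.range (b^j)).filter (fun m => ∀ d ∈ Nat.digits b m, d ∈ D)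

variable {b : ℕ} {D : Finset ℕ}

lemma digits_cond_iff (hb : 2 ≤ b) (h0 : 0 ∈ D) (m : ℕ) :
    (∀ d ∈ Nat.digits b m, d ∈ D) ↔ (m % b ∈ D ∧ ∀ d ∈ Nat.digits b (m / b), d ∈ D) := by
  rcases Nat.eq_zero_or_pos m with hm | hm
  · subst hm; simp [Nat.zero_mod, h0]
  · rw [Nat.digits_def' (by omega : 1 < b) hm]
    simp

lemma mem_CF_zero {m : ℕ} : m ∈ CF b D 0 ↔ m = 0 := by
  simp only [CF, pow_zero, Finset.mem_filter, Finset.mem_range, Nat.lt_one_iff]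
  constructor
  · exact fun h => h.1
  · rintro rfl; simp

lemma zero_mem_CF (j : ℕ) (hb : 2 ≤ b) : 0 ∈ CF b D j := by
  simp [CF]
  exact Nat.pow_pos (by omega)

lemma mem_CF_succ (hb : 2 ≤ b) (h0 : 0 ∈ D) {m j : ℕ} :
    m ∈ CF b D (j+1) ↔ m % b ∈ D ∧ m / b ∈ CF b D j := by
  simp only [CF, Finset.mem_filter, Finset.mem_range]
  rw [digits_cond_iff hb h0]
  constructor
  · rintro ⟨h1, h2, h3⟩
    refine ⟨h2, ?_, h3⟩
    rw [Nat.div_lt_iff_lt_mul (by omega : 0 < b)]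
    calc m < b^(j+1) := h1
    _ = b^j * b := by ring
  · rintro ⟨h2, h1, h3⟩
    refine ⟨?_, h2, h3⟩
    have : m / b < b ^ j := h1
    have := Nat.lt_mul_of_div_lt this (by omega : 0 < b)
    calc m < b^j * b := this
    _ = b^(j+1) := by ring

lemma mem_CF_split (hb : 2 ≤ b) (h0 : 0 ∈ D) {j t m : ℕ} :
    m ∈ CF b D (j + t) ↔ m % b^j ∈ CF b D j ∧ m / b^j ∈ CF b D t := by
  induction j generalizing m with
  | zero => simp [mem_CF_zero, Nat.mod_one]
  | succ j ih =>
    have h1 : (j+1) + t = (j + t) + 1 := by omega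
    rw [h1, mem_CF_succ hb h0, ih, mem_CF_succ hb h0]
    have e1 : m % b ^ (j+1) % b = m % b := Nat.mod_mod_of_dvd m (dvd_pow_self b (by omega))
    have e2 : m % b ^ (j+1) / b = m / b % b ^ j := by
      rw [pow_succ']
      exact Nat.mod_mul_right_div_self m b (b^j)
    have e3 : m / b ^ (j+1) = m / b / b ^ j := by
      rw [pow_succ', Nat.div_div_eq_div_mul]
    rw [e1, e2, e3]
    tauto

lemma CF_one (hb : 2 ≤ b) (h0 : 0 ∈ D) (hDsub : ∀ d ∈ D, d < b) : CF b D 1 = D := by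
  ext m
  rw [show (1:ℕ) = 0 + 1 from rfl, mem_CF_succ hb h0]
  simp only [mem_CF_zero]
  constructor
  · rintro ⟨h1, h2⟩
    have : m < b := by
      have := (Nat.div_eq_zero_iff).mp h2
      omega
    rwa [Nat.mod_eq_of_lt this] at h1
  · intro hm
    have hmb := hDsub m hm
    exact ⟨by rwa [Nat.mod_eq_of_lt hmb], Nat.div_eq_of_lt hmb⟩

lemma mem_CF_pair (hb : 2 ≤ b) (h0 : 0 ∈ D) {j t lo hi : ℕ}
    (hlo : lo ∈ CF b D j) (hhi : hi ∈ CF b D t) : lo + b^j * hi ∈ CF b D (j + t) := by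
  have hlo' : lo < b ^ j := by
    have := (Finset.mem_filter.mp hlo).1; simpa using this
  rw [mem_CF_split hb h0]
  have e1 : (lo + b^j * hi) % b^j = lo := by
    simp [Nat.add_mul_mod_self_left, Nat.mod_eq_of_lt hlo']
  have e2 : (lo + b^j * hi) / b^j = hi := by
    rw [Nat.add_mul_div_left _ _ (by positivity), Nat.div_eq_of_lt hlo']; omega
  rw [e1, e2]; exact ⟨hlo, hhi⟩

lemma sum_CF_split {M : Type*} [AddCommMonoid M] (hb : 2 ≤ b) (h0 : 0 ∈ D) (j t : ℕ)
    (f : ℕ → M) :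
    ∑ m ∈ CF b D (j + t), f m
      = ∑ p ∈ (CF b D j) ×ˢ (CF b D t), f (p.1 + b^j * p.2) := by
  refine Finset.sum_nbij' (fun m => (m % b^j, m / b^j)) (fun p => p.1 + b^j * p.2) ?_ ?_ ?_ ?_ ?_
  · intro m hm
    rw [mem_CF_split hb h0] at hm
    simpa [Finset.mem_product] using hm
  · intro p hp
    rw [Finset.mem_product] at hp
    exact mem_CF_pair hb h0 hp.1 hp.2
  · intro m hm
    show m % b ^ j + b ^ j * (m / b ^ j) = m
    exact Nat.mod_add_div m (b^j)
  · intro p hp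
    rw [Finset.mem_product] at hp
    have hlo' : p.1 < b ^ j := by
      have := (Finset.mem_filter.mp hp.1).1; simpa using this
    have e1 : (p.1 + b^j * p.2) % b^j = p.1 := by
      simp [Nat.add_mul_mod_self_left, Nat.mod_eq_of_lt hlo']
    have e2 : (p.1 + b^j * p.2) / b^j = p.2 := by
      rw [Nat.add_mul_div_left _ _ (by positivity : 0 < b^j), Nat.div_eq_of_lt hlo']; omega
    simp [e1, e2]
  · intro m hm
    congr 1
    exact (Nat.mod_add_div m (b^j)).symm

lemma card_CF (hb : 2 ≤ b) (h0 : 0 ∈ D) (hDsub : ∀ d ∈ D, d < b) (j : ℕ) :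
    (CF b D j).card = D.card ^ j := by
  induction j with
  | zero =>
    rw [pow_zero]
    refine Finset.card_eq_one.mpr ⟨0, ?_⟩
    ext m; simp [mem_CF_zero]
  | succ j ih =>
    have := sum_CF_split hb h0 j 1 (fun _ => (1:ℕ))
    simp only [Finset.sum_const, smul_eq_mul, mul_one] at this
    rw [Finset.card_product] at this
    rw [this, ih, CF_one hb h0 hDsub]
    ring

lemma CF_mono (hb : 2 ≤ b) {j t : ℕ} (h : j ≤ t) : CF b D j ⊆ CF b D t := by
  intro m hm
  simp only [CF, Finset.mem_filter, Finset.mem_range] at hm ⊢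
  exact ⟨lt_of_lt_of_le hm.1 (Nat.pow_le_pow_right (by omega) h), hm.2⟩



lemma finset_gcd_bezout (D : Finset ℕ) :
    ∃ f : ℕ → ℤ, ((D.gcd id : ℕ) : ℤ) = ∑ d ∈ D, f d * (d : ℤ) := by
  classical
  induction D using Finset.induction with
  | empty => exact ⟨fun _ => 0, by simp⟩
  | @insert a s ha ih =>
    obtain ⟨f, hf⟩ := ih
    refine ⟨fun d => if d = a then Nat.gcdA a (s.gcd id) else Nat.gcdB a (s.gcd id) * f d, ?_⟩
    rw [Finset.gcd_insert, Finset.sum_insert ha]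
    have hg : Nat.gcd a (s.gcd id) = GCDMonoid.gcd (id a) (s.gcd id) := rfl
    rw [← hg]
    rw [Nat.gcd_eq_gcd_ab a (s.gcd id)]
    have : ∑ d ∈ s, (if d = a then Nat.gcdA a (s.gcd id) else Nat.gcdB a (s.gcd id) * f d) * (d:ℤ)
        = Nat.gcdB a (s.gcd id) * ∑ d ∈ s, f d * (d:ℤ) := by
      rw [Finset.mul_sum]
      refine Finset.sum_congr rfl (fun d hd => ?_)
      rw [if_neg (by rintro rfl; exact ha hd)]
      ring
    rw [this, ← hf]
    beta_reduce
    rw [if_pos rfl]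
    push_cast
    ring

section Surj
variable {b : ℕ} {D : Finset ℕ} {q : ℕ} [NeZero q]
variable (hb : 2 ≤ b) (h0 : 0 ∈ D) (hDsub : ∀ d ∈ D, d < b)
  (hqb : Nat.Coprime q b) (hqs : Nat.Coprime q (D.gcd id))
include hb h0 hDsub hqb hqs

lemma exists_surj_level :
    ∃ L0 : ℕ, ∀ u : ZMod q, ∃ m ∈ CF b D L0, ((m:ℕ) : ZMod q) = u := by
  classical
  set S : ℕ → Finset (ZMod q) := fun t => (CF b D t).image (fun m => ((m:ℕ) : ZMod q))
    with hSdef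
  have hmono : ∀ t, S t ⊆ S (t+1) := fun t =>
    Finset.image_subset_image (CF_mono hb (Nat.le_succ t))
  have hne : ∀ t, (S t).Nonempty := fun t => ⟨0, Finset.mem_image.mpr
    ⟨0, zero_mem_CF t hb, by simp⟩⟩
  -- stabilization
  have hstab : ∃ t, S t = S (t+1) := by
    by_contra hcon
    push_neg at hcon
    have hgrow : ∀ t, t + 1 ≤ (S t).card := by
      intro t
      induction t with
      | zero => exact (hne 0).card_pos
      | succ t ih =>
        have : (S t).card < (S (t+1)).card :=
          Finset.card_lt_card (Finset.ssubset_iff_subset_ne.mpr ⟨hmono t, hcon t⟩)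
        omega
    have := hgrow q
    have hle : (S q).card ≤ q := by
      calc (S q).card ≤ Fintype.card (ZMod q) := Finset.card_le_univ _
      _ = q := ZMod.card q
    omega
  obtain ⟨t, hstab⟩ := hstab
  refine ⟨t, ?_⟩
  -- closure under u ↦ d + b * u
  have hcl : ∀ d ∈ D, ∀ u ∈ S t, (d:ZMod q) + (b:ZMod q) * u ∈ S t := by
    intro d hd u hu
    obtain ⟨m, hm, rfl⟩ := Finset.mem_image.mp hu
    have hd1 : d ∈ CF b D 1 := by rw [CF_one hb h0 hDsub]; exact hd
    have : d + b^1 * m ∈ CF b D (1 + t) := mem_CF_pair hb h0 hd1 hm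
    rw [add_comm 1 t] at this
    rw [hstab]
    refine Finset.mem_image.mpr ⟨d + b^1 * m, this, ?_⟩
    push_cast
    ring
  -- b * S = S
  have hbinj : Function.Injective (fun u : ZMod q => (b:ZMod q) * u) := by
    intro x y hxy
    have hbu : IsUnit (b : ZMod q) :=
      ⟨ZMod.unitOfCoprime b hqb.symm, ZMod.coe_unitOfCoprime b hqb.symm⟩
    exact hbu.mul_right_injective hxy
  have hbS : ∀ u ∈ S t, ∃ u' ∈ S t, (b:ZMod q) * u' = u := by
    have himg : Finset.image (fun u : ZMod q => (b:ZMod q) * u) (S t) = S t := by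
      apply Finset.eq_of_subset_of_card_le
      · intro x hx
        obtain ⟨u, hu, rfl⟩ := Finset.mem_image.mp hx
        have := hcl 0 h0 u hu
        simpa using this
      · rw [Finset.card_image_of_injective _ hbinj]
    intro u hu
    rw [← himg] at hu
    obtain ⟨u', hu', huv⟩ := Finset.mem_image.mp hu
    exact ⟨u', hu', huv⟩
  -- S + d = S
  have hAdd : ∀ d ∈ D, Finset.image (fun u => u + (d:ZMod q)) (S t) = S t := by
    intro d hd
    apply Finset.eq_of_subset_of_card_le
    · intro x hx
      obtain ⟨u, hu, rfl⟩ := Finset.mem_image.mp hx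
      obtain ⟨u', hu', rfl⟩ := hbS u hu
      have := hcl d hd u' hu'
      simpa [add_comm] using this
    · rw [Finset.card_image_of_injective _ (add_left_injective _)]
  -- the stabilizer subgroup
  have haddinj : ∀ x : ZMod q, Function.Injective (fun u : ZMod q => u + x) :=
    fun x => add_left_injective x
  set H : AddSubgroup (ZMod q) :=
    { carrier := {x | Finset.image (fun u => u + x) (S t) = S t}
      zero_mem' := by
        simp only [Set.mem_setOf_eq, add_zero]
        exact Finset.image_id
      add_mem' := by
        intro x y hx hy
        simp only [Set.mem_setOf_eq] at hx hy ⊢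
        have : (fun u : ZMod q => u + (x + y)) = (fun u => u + y) ∘ (fun u => u + x) := by
          funext u; simp [add_assoc]
        rw [this, ← Finset.image_image, hx, hy]
      neg_mem' := by
        intro x hx
        simp only [Set.mem_setOf_eq] at hx ⊢
        conv_lhs => rw [← hx]
        rw [Finset.image_image]
        have hcomp : ((fun u : ZMod q => u + -x) ∘ fun u => u + x) = id := by
          funext u; simp
        rw [hcomp, Finset.image_id]
    } with hHdef
  have hdH : ∀ d ∈ D, (d : ZMod q) ∈ H := fun d hd => hAdd d hd
  have hsH : ((D.gcd id : ℕ) : ZMod q) ∈ H := by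
    obtain ⟨f, hf⟩ := finset_gcd_bezout D
    have hcast : ((D.gcd id : ℕ) : ZMod q) = ∑ d ∈ D, (f d) • (d : ZMod q) := by
      have h2 := congrArg (fun z : ℤ => ((z : ℤ) : ZMod q)) hf
      push_cast at h2
      simpa [zsmul_eq_mul] using h2
    rw [hcast]
    exact AddSubgroup.sum_mem H (fun d hd => AddSubgroup.zsmul_mem H (hdH d hd) (f d))
  have hallH : ∀ x : ZMod q, x ∈ H := by
    intro x
    set su : (ZMod q)ˣ := ZMod.unitOfCoprime (D.gcd id) hqs.symm with hsu
    have hsc : ((su : ZMod q)) = ((D.gcd id : ℕ) : ZMod q) := ZMod.coe_unitOfCoprime _ _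
    have hx : x = ((x * ↑su⁻¹).val) • ((D.gcd id : ℕ) : ZMod q) := by
      have hval : (((x * ↑su⁻¹).val : ℕ) : ZMod q) = x * ↑su⁻¹ :=
        ZMod.natCast_rightInverse _
      rw [nsmul_eq_mul, hval, ← hsc]
      exact (Units.inv_mul_cancel_right x su).symm
    rw [hx]
    exact AddSubgroup.nsmul_mem H hsH _
  intro u
  have h0S : (0 : ZMod q) ∈ S t :=
    Finset.mem_image.mpr ⟨0, zero_mem_CF t hb, by simp⟩
  have himg : Finset.image (fun v => v + u) (S t) = S t := hallH u
  have huS : u ∈ S t := by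
    rw [← himg]
    exact Finset.mem_image.mpr ⟨0, h0S, by simp⟩
  obtain ⟨m, hm, hmv⟩ := Finset.mem_image.mp huS
  exact ⟨m, hm, hmv⟩
end Surj


section Modq
variable (b : ℕ) (D : Finset ℕ) (q : ℕ) [NeZero q]

def Acnt (j : ℕ) (w : ZMod q) : ℕ :=
  ((CF b D j).filter (fun m => ((m:ℕ) : ZMod q) = w)).card

noncomputable def Mx (j : ℕ) : ℕ :=
  (Finset.univ : Finset (ZMod q)).sup' Finset.univ_nonempty (Acnt b D q j)

noncomputable def mnq (j : ℕ) : ℕ :=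
  (Finset.univ : Finset (ZMod q)).inf' Finset.univ_nonempty (Acnt b D q j)

variable {b D q}

lemma Acnt_le_Mx (j : ℕ) (w : ZMod q) : Acnt b D q j w ≤ Mx b D q j :=
  Finset.le_sup' _ (Finset.mem_univ w)

lemma mnq_le_Acnt (j : ℕ) (w : ZMod q) : mnq b D q j ≤ Acnt b D q j w :=
  Finset.inf'_le _ (Finset.mem_univ w)

lemma mnq_le_Mx (j : ℕ) : mnq b D q j ≤ Mx b D q j :=
  le_trans (mnq_le_Acnt j 0) (Acnt_le_Mx j 0)

variable (hb : 2 ≤ b) (h0 : 0 ∈ D) (hDsub : ∀ d ∈ D, d < b)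
include hb h0 hDsub

lemma sum_Acnt (j : ℕ) : ∑ w : ZMod q, Acnt b D q j w = D.card ^ j := by
  rw [← card_CF hb h0 hDsub j]
  exact (Finset.card_eq_sum_card_fiberwise (fun m _ => Finset.mem_univ ((m:ℕ) : ZMod q))).symm

lemma Acnt_split (j t : ℕ) (w : ZMod q) :
    Acnt b D q (j + t) w = ∑ hi ∈ CF b D t, Acnt b D q j (w - (b:ZMod q)^j * (hi:ℕ)) := by
  unfold Acnt
  rw [Finset.card_filter, sum_CF_split hb h0 j t, Finset.sum_product_right]
  refine Finset.sum_congr rfl (fun hi _ => ?_)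
  rw [Finset.card_filter]
  refine Finset.sum_congr rfl (fun lo _ => ?_)
  congr 1
  simp only [eq_iff_iff]
  push_cast
  constructor
  · intro h; rw [← h]; ring
  · intro h; rw [h]; ring

lemma Mx_zero_le : Mx b D q 0 ≤ 1 := by
  apply Finset.sup'_le
  intro w _
  calc Acnt b D q 0 w ≤ (CF b D 0).card := Finset.card_filter_le _ _
  _ = D.card ^ 0 := card_CF hb h0 hDsub 0
  _ = 1 := pow_zero _

lemma q_mnq_le (j : ℕ) : q * mnq b D q j ≤ D.card ^ j := by
  rw [← sum_Acnt (q := q) hb h0 hDsub j]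
  calc q * mnq b D q j = ∑ _w : ZMod q, mnq b D q j := by
        rw [Finset.sum_const, Finset.card_univ, ZMod.card q, smul_eq_mul]
  _ ≤ ∑ w : ZMod q, Acnt b D q j w := Finset.sum_le_sum (fun w _ => mnq_le_Acnt j w)

lemma le_q_Mx (j : ℕ) : D.card ^ j ≤ q * Mx b D q j := by
  rw [← sum_Acnt (q := q) hb h0 hDsub j]
  calc ∑ w : ZMod q, Acnt b D q j w ≤ ∑ _w : ZMod q, Mx b D q j :=
        Finset.sum_le_sum (fun w _ => Acnt_le_Mx j w)
  _ = q * Mx b D q j := by rw [Finset.sum_const, Finset.card_univ, ZMod.card q, smul_eq_mul]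

lemma Mx_step (j : ℕ) : Mx b D q (j+1) ≤ D.card * Mx b D q j := by
  apply Finset.sup'_le
  intro w _
  rw [Acnt_split hb h0 hDsub j 1 w, CF_one hb h0 hDsub]
  calc ∑ hi ∈ D, Acnt b D q j (w - (b:ZMod q)^j * (hi:ℕ))
      ≤ ∑ _hi ∈ D, Mx b D q j := Finset.sum_le_sum (fun hi _ => Acnt_le_Mx j _)
  _ = D.card * Mx b D q j := by rw [Finset.sum_const, smul_eq_mul]

lemma mnq_step (j : ℕ) : D.card * mnq b D q j ≤ mnq b D q (j+1) := by
  apply Finset.le_inf'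
  intro w _
  rw [Acnt_split hb h0 hDsub j 1 w, CF_one hb h0 hDsub]
  calc D.card * mnq b D q j = ∑ _hi ∈ D, mnq b D q j := by rw [Finset.sum_const, smul_eq_mul]
  _ ≤ ∑ hi ∈ D, Acnt b D q j (w - (b:ZMod q)^j * (hi:ℕ)) :=
        Finset.sum_le_sum (fun hi _ => mnq_le_Acnt j _)

section Contract
variable (hqb : Nat.Coprime q b) {L0 : ℕ}
  (hsurj : ∀ u : ZMod q, ∃ m ∈ CF b D L0, ((m:ℕ) : ZMod q) = u)

include hqb hsurj

lemma contract_key (j : ℕ) (w : ZMod q) :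
    q ≤ D.card ^ L0 ∧
    Acnt b D q (j + L0) w ≤ D.card ^ j + (D.card ^ L0 - q) * Mx b D q j ∧
    D.card ^ j + (D.card ^ L0 - q) * mnq b D q j ≤ Acnt b D q (j + L0) w := by
  have hbu : Nat.Coprime b q := hqb.symm
  set bu : (ZMod q)ˣ := ZMod.unitOfCoprime b hbu with hbu_def
  have hbcoe : ((bu : ZMod q)) = (b : ZMod q) := ZMod.coe_unitOfCoprime b hbu
  -- section of the residue map
  have hτ : ∀ u : ZMod q, ∃ m ∈ CF b D L0, w - (b:ZMod q)^j * (m:ℕ) = u := by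
    intro u
    obtain ⟨m, hm, hmv⟩ := hsurj ((w - u) * ((bu⁻¹ : (ZMod q)ˣ) : ZMod q)^j)
    refine ⟨m, hm, ?_⟩
    rw [hmv]
    have hunit : (b:ZMod q)^j * ((bu⁻¹ : (ZMod q)ˣ) : ZMod q)^j = 1 := by
      rw [← hbcoe, ← mul_pow, ← Units.val_mul, mul_inv_cancel, Units.val_one, one_pow]
    calc w - (b:ZMod q)^j * ((w - u) * ((bu⁻¹ : (ZMod q)ˣ) : ZMod q)^j)
        = w - (w - u) * ((b:ZMod q)^j * ((bu⁻¹ : (ZMod q)ˣ) : ZMod q)^j) := by ring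
    _ = u := by rw [hunit]; ring
  classical
  set σ : ZMod q → ℕ := fun u => (hτ u).choose with hσdef
  have hσCF : ∀ u, σ u ∈ CF b D L0 := fun u => (hτ u).choose_spec.1
  have hσval : ∀ u, w - (b:ZMod q)^j * (σ u : ℕ) = u := fun u => (hτ u).choose_spec.2
  have hσinj : Function.Injective σ := by
    intro u u' h
    rw [← hσval u, ← hσval u', h]
  set T : Finset ℕ := Finset.image σ Finset.univ with hTdef
  have hTsub : T ⊆ CF b D L0 := by
    intro x hx
    obtain ⟨u, _, rfl⟩ := Finset.mem_image.mp hx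
    exact hσCF u
  have hTcard : T.card = q := by
    rw [hTdef, Finset.card_image_of_injective _ hσinj, Finset.card_univ, ZMod.card q]
  have hqle : q ≤ D.card ^ L0 := by
    rw [← hTcard, ← card_CF hb h0 hDsub L0]
    exact Finset.card_le_card hTsub
  have hsplit : Acnt b D q (j + L0) w
      = ∑ hi ∈ CF b D L0 \ T, Acnt b D q j (w - (b:ZMod q)^j * (hi:ℕ))
        + ∑ hi ∈ T, Acnt b D q j (w - (b:ZMod q)^j * (hi:ℕ)) := by
    rw [Acnt_split hb h0 hDsub j L0 w, Finset.sum_sdiff hTsub]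
  have hTsum : ∑ hi ∈ T, Acnt b D q j (w - (b:ZMod q)^j * (hi:ℕ)) = D.card ^ j := by
    rw [hTdef, Finset.sum_image (fun u _ u' _ h => hσinj h)]
    rw [← sum_Acnt (q := q) hb h0 hDsub j]
    exact Finset.sum_congr rfl (fun u _ => by rw [hσval u])
  have hcard_sdiff : (CF b D L0 \ T).card = D.card ^ L0 - q := by
    rw [Finset.card_sdiff_of_subset hTsub, card_CF hb h0 hDsub, hTcard]
  refine ⟨hqle, ?_, ?_⟩
  · rw [hsplit, hTsum]
    have : ∑ hi ∈ CF b D L0 \ T, Acnt b D q j (w - (b:ZMod q)^j * (hi:ℕ))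
        ≤ (D.card ^ L0 - q) * Mx b D q j := by
      calc _ ≤ ∑ _hi ∈ CF b D L0 \ T, Mx b D q j :=
            Finset.sum_le_sum (fun hi _ => Acnt_le_Mx j _)
      _ = _ := by rw [Finset.sum_const, smul_eq_mul, hcard_sdiff]
    omega
  · rw [hsplit, hTsum]
    have : (D.card ^ L0 - q) * mnq b D q j
        ≤ ∑ hi ∈ CF b D L0 \ T, Acnt b D q j (w - (b:ZMod q)^j * (hi:ℕ)) := by
      calc (D.card ^ L0 - q) * mnq b D q j
          = ∑ _hi ∈ CF b D L0 \ T, mnq b D q j := by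
            rw [Finset.sum_const, smul_eq_mul, hcard_sdiff]
      _ ≤ _ := Finset.sum_le_sum (fun hi _ => mnq_le_Acnt j _)
    omega

lemma Gp_contract (j : ℕ) :
    Mx b D q (j + L0) - mnq b D q (j + L0)
      ≤ (D.card ^ L0 - q) * (Mx b D q j - mnq b D q j) := by
  obtain ⟨w, -, hw⟩ := Finset.exists_mem_eq_sup' (Finset.univ_nonempty (α := ZMod q))
    (Acnt b D q (j + L0))
  obtain ⟨w', -, hw'⟩ := Finset.exists_mem_eq_inf' (Finset.univ_nonempty (α := ZMod q))
    (Acnt b D q (j + L0))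
  have h1 := contract_key hb h0 hDsub hqb hsurj j w
  have h2 := contract_key hb h0 hDsub hqb hsurj j w'
  have hM : Mx b D q (j + L0) = Acnt b D q (j + L0) w := hw
  have hm : mnq b D q (j + L0) = Acnt b D q (j + L0) w' := hw'
  have hmono : (D.card ^ L0 - q) * mnq b D q j ≤ (D.card ^ L0 - q) * Mx b D q j :=
    Nat.mul_le_mul_left _ (mnq_le_Mx j)
  rw [hM, hm]
  rw [Nat.mul_sub]
  omega

end Contract
end Modq


section P4
variable {b : ℕ} {D : Finset ℕ}

lemma digits_cond_pair (hb : 2 ≤ b) (h0 : 0 ∈ D) (hDsub : ∀ d ∈ D, d < b)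
    {L v h : ℕ} (hv : v < b^L) (hh : h < b) :
    (∀ d ∈ Nat.digits b (v + b^L * h), d ∈ D) ↔ (v ∈ CF b D L ∧ h ∈ D) := by
  have hbL : 0 < b ^ L := by positivity
  have hmlt : v + b^L * h < b^(L+1) := by
    calc v + b^L * h < b^L + b^L * h := by omega
    _ = b^L * (h+1) := by ring
    _ ≤ b^L * b := Nat.mul_le_mul_left _ (by omega)
    _ = b^(L+1) := by ring
  have e1 : (v + b^L * h) % b^L = v := by
    simp [Nat.add_mul_mod_self_left, Nat.mod_eq_of_lt hv]
  have e2 : (v + b^L * h) / b^L = h := by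
    rw [Nat.add_mul_div_left _ _ hbL, Nat.div_eq_of_lt hv]; omega
  constructor
  · intro hC
    have hmem : v + b^L * h ∈ CF b D (L + 1) := by
      simp only [CF, Finset.mem_filter, Finset.mem_range]
      exact ⟨hmlt, hC⟩
    rw [mem_CF_split hb h0, e1, e2, CF_one hb h0 hDsub] at hmem
    exact hmem
  · rintro ⟨h1, h2⟩
    have h2' : h ∈ CF b D 1 := by rw [CF_one hb h0 hDsub]; exact h2
    have hmem : v + b^L * h ∈ CF b D (L + 1) := by
      rw [mem_CF_split hb h0, e1, e2]
      exact ⟨h1, h2'⟩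
    simp only [CF, Finset.mem_filter] at hmem
    exact hmem.2

lemma filter_CF_eq (L : ℕ) (p : ℕ → Prop) [DecidablePred p] :
    ((Finset.range (b^L)).filter (fun v => v ∈ CF b D L ∧ p v)) = (CF b D L).filter p := by
  ext v
  simp only [Finset.mem_filter, CF, Finset.mem_range]
  tauto

lemma count_top_split (hb : 2 ≤ b) (h0 : 0 ∈ D) (hDsub : ∀ d ∈ D, d < b)
    (L xh r : ℕ) (hxh : xh < b) (hr : r < b^L) (p : ℕ → Prop) [DecidablePred p] :
    ((Finset.range (b^L * xh + r)).filter
        (fun m => (∀ d ∈ Nat.digits b m, d ∈ D) ∧ p m)).card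
      = ∑ h ∈ D.filter (· < xh), ((CF b D L).filter (fun v => p (v + b^L * h))).card
        + (if xh ∈ D then ((Finset.range r).filter
            (fun v => (∀ d ∈ Nat.digits b v, d ∈ D) ∧ p (v + b^L * xh))).card else 0) := by
  classical
  have hbL : 0 < b ^ L := by positivity
  rw [Finset.range_add, Finset.filter_union, Finset.card_union_of_disjoint]
  · congr 1
    -- Part A
    · rw [Finset.card_filter]
      rw [Finset.sum_nbij' (i := fun m => ((m / b^L : ℕ), (m % b^L : ℕ)))
        (j := fun pr => pr.2 + b^L * pr.1)
        (t := (Finset.range xh) ×ˢ (Finset.range (b^L)))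
        (g := fun pr => if ((∀ d ∈ Nat.digits b (pr.2 + b^L * pr.1), d ∈ D)
          ∧ p (pr.2 + b^L * pr.1)) then 1 else 0)]
      · rw [Finset.sum_product]
        have hstep : ∀ h ∈ Finset.range xh,
            (∑ v ∈ Finset.range (b^L), if ((∀ d ∈ Nat.digits b (v + b^L * h), d ∈ D)
              ∧ p (v + b^L * h)) then 1 else 0)
            = if h ∈ D then ((CF b D L).filter (fun v => p (v + b^L * h))).card else 0 := by
          intro h hh
          rw [Finset.mem_range] at hh
          have hhb : h < b := lt_trans hh hxh
          by_cases hD : h ∈ D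
          · rw [if_pos hD, ← filter_CF_eq L, Finset.card_filter]
            refine Finset.sum_congr rfl (fun v hv => ?_)
            rw [Finset.mem_range] at hv
            congr 1
            rw [digits_cond_pair hb h0 hDsub hv hhb]
            simp [hD]
          · rw [if_neg hD]
            refine Finset.sum_eq_zero (fun v hv => ?_)
            rw [Finset.mem_range] at hv
            rw [if_neg]
            rw [digits_cond_pair hb h0 hDsub hv hhb]
            tauto
        rw [Finset.sum_congr rfl hstep]
        rw [Finset.sum_ite_mem]
        rw [Finset.sum_congr (show Finset.range xh ∩ D = D.filter (· < xh) by
          ext h; simp [Finset.mem_filter, and_comm]) (fun _ _ => rfl)]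
      · intro m hm
        rw [Finset.mem_range] at hm
        simp only [Finset.mem_product, Finset.mem_range]
        constructor
        · rw [Nat.div_lt_iff_lt_mul hbL, mul_comm]; omega
        · exact Nat.mod_lt _ hbL
      · intro pr hpr
        simp only [Finset.mem_product, Finset.mem_range] at hpr
        rw [Finset.mem_range]
        calc pr.2 + b^L * pr.1 < b^L + b^L * pr.1 := by omega
        _ = b^L * (pr.1 + 1) := by ring
        _ ≤ b^L * xh := Nat.mul_le_mul_left _ (by omega)
      · intro m hm
        show m % b^L + b^L * (m / b^L) = m
        exact Nat.mod_add_div m (b^L)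
      · intro pr hpr
        simp only [Finset.mem_product, Finset.mem_range] at hpr
        have e1 : (pr.2 + b^L * pr.1) % b^L = pr.2 := by
          simp [Nat.add_mul_mod_self_left, Nat.mod_eq_of_lt hpr.2]
        have e2 : (pr.2 + b^L * pr.1) / b^L = pr.1 := by
          rw [Nat.add_mul_div_left _ _ hbL, Nat.div_eq_of_lt hpr.2]; omega
        simp [e1, e2]
      · intro m hm
        have hrec : (m % b^L : ℕ) + b^L * (m / b^L) = m := Nat.mod_add_div m (b^L)
        show _ = ite ((∀ d ∈ Nat.digits b (m % b^L + b^L * (m / b^L)), d ∈ D)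
          ∧ p (m % b^L + b^L * (m / b^L))) 1 0
        rw [hrec]
    -- Part B
    · rw [Finset.card_filter, Finset.sum_map]
      by_cases hD : xh ∈ D
      · rw [if_pos hD, Finset.card_filter]
        refine Finset.sum_congr rfl (fun v hv => ?_)
        rw [Finset.mem_range] at hv
        have hv' : v < b ^ L := lt_trans hv hr
        have harg : (addLeftEmbedding (b^L * xh)) v = v + b^L * xh := by
          simp [addLeftEmbedding]; omega
        rw [harg]
        congr 1
        simp only [eq_iff_iff]
        rw [digits_cond_pair hb h0 hDsub hv' hxh]
        simp only [CF, Finset.mem_filter, Finset.mem_range]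
        constructor
        · rintro ⟨⟨h1, h2⟩, h3⟩; exact ⟨h1.2, h3⟩
        · rintro ⟨h1, h2⟩; exact ⟨⟨⟨hv', h1⟩, hD⟩, h2⟩
      · rw [if_neg hD]
        refine Finset.sum_eq_zero (fun v hv => ?_)
        rw [Finset.mem_range] at hv
        have hv' : v < b ^ L := lt_trans hv hr
        have harg : (addLeftEmbedding (b^L * xh)) v = v + b^L * xh := by
          simp [addLeftEmbedding]; omega
        rw [harg, if_neg]
        rw [digits_cond_pair hb h0 hDsub hv' hxh]
        tauto
  · -- disjointness
    refine Finset.disjoint_left.mpr (fun m hm1 hm2 => ?_)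
    rw [Finset.mem_filter, Finset.mem_range] at hm1
    rw [Finset.mem_filter, Finset.mem_map] at hm2
    obtain ⟨⟨v, hv, rfl⟩, -⟩ := hm2
    have : (addLeftEmbedding (b^L * xh)) v = b^L * xh + v := rfl
    omega

end P4


def Bq (b : ℕ) (D : Finset ℕ) (q : ℕ) (X : ℕ) (w : ZMod q) : ℕ :=
  ((Finset.range X).filter
    (fun m => (∀ d ∈ Nat.digits b m, d ∈ D) ∧ ((m:ℕ) : ZMod q) = w)).card

def Nn (b : ℕ) (D : Finset ℕ) (X : ℕ) : ℕ :=
  ((Finset.range X).filter (fun m => ∀ d ∈ Nat.digits b m, d ∈ D)).card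

section P5
variable {b : ℕ} {D : Finset ℕ} {q : ℕ}

lemma Bq_split (hb : 2 ≤ b) (h0 : 0 ∈ D) (hDsub : ∀ d ∈ D, d < b)
    (L xh r : ℕ) (hxh : xh < b) (hr : r < b^L) (w : ZMod q) :
    Bq b D q (b^L * xh + r) w
      = ∑ h ∈ D.filter (· < xh), Acnt b D q L (w - (b:ZMod q)^L * (h:ℕ))
        + (if xh ∈ D then Bq b D q r (w - (b:ZMod q)^L * (xh:ℕ)) else 0) := by
  unfold Bq
  rw [count_top_split hb h0 hDsub L xh r hxh hr (fun m => ((m:ℕ) : ZMod q) = w)]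
  congr 1
  · refine Finset.sum_congr rfl (fun h hh => ?_)
    unfold Acnt
    congr 1
    apply Finset.filter_congr
    intro v hv
    push_cast
    constructor
    · intro he; rw [← he]; ring
    · intro he; rw [he]; ring
  · by_cases hD : xh ∈ D
    · rw [if_pos hD, if_pos hD]
      congr 1
      apply Finset.filter_congr
      intro v hv
      simp only [and_congr_right_iff]
      intro hC
      push_cast
      constructor
      · intro he; rw [← he]; ring
      · intro he; rw [he]; ring
    · rw [if_neg hD, if_neg hD]

lemma Nn_split (hb : 2 ≤ b) (h0 : 0 ∈ D) (hDsub : ∀ d ∈ D, d < b)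
    (L xh r : ℕ) (hxh : xh < b) (hr : r < b^L) :
    Nn b D (b^L * xh + r)
      = (D.filter (· < xh)).card * D.card ^ L
        + (if xh ∈ D then Nn b D r else 0) := by
  unfold Nn
  have h1 : ((Finset.range (b^L * xh + r)).filter
      (fun m => ∀ d ∈ Nat.digits b m, d ∈ D))
      = ((Finset.range (b^L * xh + r)).filter
      (fun m => (∀ d ∈ Nat.digits b m, d ∈ D) ∧ (fun _ => True) m)) := by
    simp
  rw [h1, count_top_split hb h0 hDsub L xh r hxh hr (fun _ => True)]
  congr 1
  · rw [Finset.sum_congr rfl (fun h _ => by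
      rw [Finset.filter_true, card_CF hb h0 hDsub L])]
    rw [Finset.sum_const, smul_eq_mul]
  · by_cases hD : xh ∈ D
    · rw [if_pos hD, if_pos hD]
      congr 1
      simp
    · rw [if_neg hD, if_neg hD]

lemma main_est (hb : 2 ≤ b) (h0 : 0 ∈ D) (hDsub : ∀ d ∈ D, d < b) (hq : 0 < q)
    (G : ℕ → ℝ) (hG0 : ∀ j, 0 ≤ G j)
    (hA : ∀ j (u : ZMod q), |(Acnt b D q j u : ℝ) - (D.card:ℝ)^j/(q:ℝ)| ≤ G j) :
    ∀ X, ∀ w : ZMod q, |(Bq b D q X w : ℝ) - (Nn b D X : ℝ)/(q:ℝ)|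
      ≤ ∑ j ∈ Finset.range (Nat.log b X + 1), (D.card : ℝ) * G j := by
  intro X
  induction X using Nat.strong_induction_on with
  | _ X ih =>
  intro w
  rcases Nat.eq_zero_or_pos X with rfl | hX
  · have : ∀ (w : ZMod q), Bq b D q 0 w = 0 := fun w => by simp [Bq]
    rw [this w]
    have : Nn b D 0 = 0 := by simp [Nn]
    rw [this]
    simp only [Nat.cast_zero, zero_div, sub_zero, abs_zero]
    exact Finset.sum_nonneg (fun j _ => mul_nonneg (by positivity) (hG0 j))
  · set L := Nat.log b X with hL
    set xh := X / b^L with hxh_def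
    set r := X % b^L with hr_def
    have hbL : 0 < b ^ L := by positivity
    have hXeq : b^L * xh + r = X := Nat.div_add_mod X (b^L)
    have hbLX : b ^ L ≤ X := Nat.pow_log_le_self b (by omega)
    have hXlt : X < b ^ (L + 1) := Nat.lt_pow_succ_log_self (by omega) X
    have hxh1 : 1 ≤ xh := Nat.one_le_div_iff hbL |>.mpr hbLX
    have hxhb : xh < b := by
      rw [hxh_def, Nat.div_lt_iff_lt_mul hbL]
      calc X < b^(L+1) := hXlt
      _ = b * b^L := by ring
    have hrlt : r < b ^ L := Nat.mod_lt _ hbL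
    have hrX : r < X := by omega
    -- rewrite using splits
    rw [← hXeq, Bq_split hb h0 hDsub L xh r hxhb hrlt w, Nn_split hb h0 hDsub L xh r hxhb hrlt]
    set Dx := D.filter (· < xh) with hDx
    have hDxc : (Dx.card : ℝ) ≤ (D.card : ℝ) := by
      exact_mod_cast Nat.cast_le.mpr (Finset.card_le_card (Finset.filter_subset _ _))
    set cL : ℝ := (D.card : ℝ)^L with hcL
    have e3 : ((∑ h ∈ Dx, Acnt b D q L (w - (b:ZMod q)^L * (h:ℕ))
          + if xh ∈ D then Bq b D q r (w - (b:ZMod q)^L * (xh:ℕ)) else 0 : ℕ) : ℝ)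
        - ((Dx.card * D.card ^ L + if xh ∈ D then Nn b D r else 0 : ℕ) : ℝ)/(q:ℝ)
        = (∑ h ∈ Dx, ((Acnt b D q L (w - (b:ZMod q)^L * (h:ℕ)) : ℝ) - cL/(q:ℝ)))
          + ((if xh ∈ D then (Bq b D q r (w - (b:ZMod q)^L * (xh:ℕ)) : ℝ) else 0)
            - (if xh ∈ D then (Nn b D r : ℝ) else 0)/(q:ℝ)) := by
      push_cast [apply_ite (fun (n:ℕ) => (n:ℝ))]
      rw [Finset.sum_sub_distrib, Finset.sum_const, nsmul_eq_mul]
      ring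
    rw [e3]
    have htail : |(if xh ∈ D then (Bq b D q r (w - (b:ZMod q)^L * (xh:ℕ)) : ℝ) else 0)
        - (if xh ∈ D then (Nn b D r : ℝ) else 0)/(q:ℝ)|
        ≤ ∑ j ∈ Finset.range L, (D.card : ℝ) * G j := by
      by_cases hD : xh ∈ D
      · rw [if_pos hD, if_pos hD]
        rcases Nat.eq_zero_or_pos r with hr0 | hr1
        · have hB0 : Bq b D q 0 (w - (b:ZMod q)^L * (xh:ℕ)) = 0 := by simp [Bq]
          have hN0 : Nn b D 0 = 0 := by simp [Nn]
          rw [hr0, hB0, hN0]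
          simp only [Nat.cast_zero, zero_div, sub_zero, abs_zero]
          exact Finset.sum_nonneg (fun j _ => mul_nonneg (by positivity) (hG0 j))
        · have hIH := ih r hrX (w - (b:ZMod q)^L * (xh:ℕ))
          have hlog : Nat.log b r + 1 ≤ L := Nat.log_lt_of_lt_pow (by omega) hrlt
          refine le_trans hIH ?_
          apply Finset.sum_le_sum_of_subset_of_nonneg
          · exact Finset.range_subset_range.mpr (by omega)
          · intro j _ _
            exact mul_nonneg (by positivity) (hG0 j)
      · rw [if_neg hD, if_neg hD]
        simp only [zero_div, sub_zero, abs_zero]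
        exact Finset.sum_nonneg (fun j _ => mul_nonneg (by positivity) (hG0 j))
    calc |(∑ h ∈ Dx, ((Acnt b D q L (w - (b:ZMod q)^L * (h:ℕ)) : ℝ) - cL/(q:ℝ)))
          + ((if xh ∈ D then (Bq b D q r (w - (b:ZMod q)^L * (xh:ℕ)) : ℝ) else 0)
            - (if xh ∈ D then (Nn b D r : ℝ) else 0)/(q:ℝ))|
        ≤ |∑ h ∈ Dx, ((Acnt b D q L (w - (b:ZMod q)^L * (h:ℕ)) : ℝ) - cL/(q:ℝ))|
          + |(if xh ∈ D then (Bq b D q r (w - (b:ZMod q)^L * (xh:ℕ)) : ℝ) else 0)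
            - (if xh ∈ D then (Nn b D r : ℝ) else 0)/(q:ℝ)| := abs_add_le _ _
    _ ≤ (∑ h ∈ Dx, |(Acnt b D q L (w - (b:ZMod q)^L * (h:ℕ)) : ℝ) - cL/(q:ℝ)|)
          + ∑ j ∈ Finset.range L, (D.card : ℝ) * G j :=
        add_le_add (Finset.abs_sum_le_sum_abs _ _) htail
    _ ≤ (∑ _h ∈ Dx, G L) + ∑ j ∈ Finset.range L, (D.card : ℝ) * G j := by
        gcongr with h hh
        exact hA L _
    _ ≤ (D.card : ℝ) * G L + ∑ j ∈ Finset.range L, (D.card : ℝ) * G j := by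
        rw [Finset.sum_const, nsmul_eq_mul]
        gcongr
        exact hG0 L
    _ = ∑ j ∈ Finset.range (L + 1), (D.card : ℝ) * G j := by
        rw [Finset.sum_range_succ]
        ring
end P5

open Filter

lemma aux_tendsto (c : ℝ) (hc : 2 ≤ c) (g γ : ℕ → ℝ) (hg : ∀ j, 0 ≤ g j)
    (hgγ : ∀ j, g j ≤ c ^ j * γ j) (hγ0 : ∀ j, 0 ≤ γ j)
    (hγ : Tendsto γ atTop (nhds 0)) :
    Tendsto (fun L => (∑ j ∈ Finset.range (L+1), c * g j) / c ^ L) atTop (nhds 0) := by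
  have hc0 : (0:ℝ) < c := by linarith
  rw [Metric.tendsto_atTop]
  intro ε hε
  set ε' : ℝ := ε / (8 * c) with hε'
  have hε'pos : 0 < ε' := by positivity
  obtain ⟨J, hJ⟩ := (Metric.tendsto_atTop.mp hγ) ε' hε'pos
  set K : ℝ := ∑ j ∈ Finset.range J, c * g j with hK
  have hK0 : 0 ≤ K := Finset.sum_nonneg (fun j _ => mul_nonneg (by linarith) (hg j))
  have hcL : Tendsto (fun L : ℕ => c ^ L) atTop atTop :=
    tendsto_pow_atTop_atTop_of_one_lt (by linarith)
  obtain ⟨N1, hN1⟩ := Filter.eventually_atTop.mp (hcL.eventually_ge_atTop (K / (ε/4)))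
  refine ⟨max J N1, fun L hL => ?_⟩
  have hLJ : J ≤ L := le_trans (le_max_left _ _) hL
  have hLN1 : N1 ≤ L := le_trans (le_max_right _ _) hL
  have hcLpos : (0:ℝ) < c ^ L := by positivity
  have hφ0 : 0 ≤ (∑ j ∈ Finset.range (L+1), c * g j) / c ^ L :=
    div_nonneg (Finset.sum_nonneg (fun j _ => mul_nonneg (by linarith) (hg j))) (le_of_lt hcLpos)
  rw [Real.dist_eq, sub_zero, abs_of_nonneg hφ0]
  -- split the sum
  have hsplit : ∑ j ∈ Finset.range (L+1), c * g j
      = K + ∑ j ∈ Finset.Ico J (L+1), c * g j := by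
    rw [hK]; simp only [Finset.range_eq_Ico]
    exact (Finset.sum_Ico_consecutive _ (Nat.zero_le J) (by omega : J ≤ L + 1)).symm
  have htail : ∑ j ∈ Finset.Ico J (L+1), c * g j ≤ ε' * c * ∑ j ∈ Finset.range (L+1), c ^ j := by
    calc ∑ j ∈ Finset.Ico J (L+1), c * g j ≤ ∑ j ∈ Finset.Ico J (L+1), c * (c^j * ε') := by
          apply Finset.sum_le_sum
          intro j hj
          rw [Finset.mem_Ico] at hj
          have hγj : γ j ≤ ε' := by
            have := hJ j hj.1
            rw [Real.dist_eq, sub_zero] at this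
            calc γ j ≤ |γ j| := le_abs_self _
            _ ≤ ε' := le_of_lt this
          have hcj : (0:ℝ) ≤ c ^ j := by positivity
          have h1 : g j ≤ c^j * ε' :=
            le_trans (hgγ j) (mul_le_mul_of_nonneg_left hγj hcj)
          exact mul_le_mul_of_nonneg_left h1 (le_of_lt hc0)
    _ ≤ ∑ j ∈ Finset.range (L+1), c * (c^j * ε') := by
          apply Finset.sum_le_sum_of_subset_of_nonneg
          · rw [Finset.range_eq_Ico]
            exact Finset.Ico_subset_Ico (Nat.zero_le _) le_rfl
          · intro j _ _
            positivity
    _ = ε' * c * ∑ j ∈ Finset.range (L+1), c ^ j := by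
          rw [Finset.mul_sum]
          exact Finset.sum_congr rfl (fun j _ => by ring)
  have hgeom : ∑ j ∈ Finset.range (L+1), c ^ j ≤ 2 * c ^ L := by
    rw [geom_sum_eq (by linarith : c ≠ 1)]
    rw [div_le_iff₀ (by linarith : (0:ℝ) < c - 1)]
    have h1 : c ^ (L+1) = c * c ^ L := by ring
    nlinarith [hcLpos]
  have hKbound : K / c ^ L ≤ ε / 4 := by
    have := hN1 L hLN1
    rw [div_le_iff₀ hcLpos]
    calc K = (K / (ε/4)) * (ε/4) := by field_simp
    _ ≤ c ^ L * (ε/4) := by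
        apply mul_le_mul_of_nonneg_right this (by linarith)
    _ = ε / 4 * c ^ L := by ring
  calc (∑ j ∈ Finset.range (L+1), c * g j) / c ^ L
      = K / c ^ L + (∑ j ∈ Finset.Ico J (L+1), c * g j) / c ^ L := by
        rw [hsplit]; ring
  _ ≤ ε / 4 + (ε' * c * (2 * c ^ L)) / c ^ L := by
        gcongr
        calc ∑ j ∈ Finset.Ico J (L+1), c * g j ≤ ε' * c * ∑ j ∈ Finset.range (L+1), c ^ j :=
              htail
        _ ≤ ε' * c * (2 * c ^ L) := by
              apply mul_le_mul_of_nonneg_left hgeom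
              positivity
  _ = ε / 4 + 2 * (ε' * c) := by field_simp
  _ = ε / 4 + ε / 4 := by rw [hε']; field_simp; ring
  _ < ε := by linarith


section P7
variable {b : ℕ} {D : Finset ℕ}

lemma gcd_dvd_of_digits (hb : 2 ≤ b) (h0 : 0 ∈ D) :
    ∀ m, (∀ d ∈ Nat.digits b m, d ∈ D) → D.gcd id ∣ m := by
  intro m
  induction m using Nat.strong_induction_on with
  | _ m ih =>
  intro hm
  rcases Nat.eq_zero_or_pos m with rfl | hm0
  · exact dvd_zero _
  · rw [digits_cond_iff hb h0] at hm
    have h1 : D.gcd id ∣ m % b := Finset.gcd_dvd hm.1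
    have h2 : D.gcd id ∣ m / b := ih (m / b) (Nat.div_lt_self hm0 (by omega)) hm.2
    have he : m = b * (m / b) + m % b := (Nat.div_add_mod m b).symm
    rw [he]
    exact dvd_add (h2.mul_left b) h1

lemma count_eq {k : ℕ → ℕ} (hk : StrictMono k)
    (hkr : Set.range k = {m : ℕ | ∀ d ∈ Nat.digits b m, d ∈ D})
    (N : ℕ) (p : ℕ → Prop) [DecidablePred p] :
    ((Finset.range N).filter (fun n => p (k n))).card
      = ((Finset.range (k N)).filter
          (fun m => (∀ d ∈ Nat.digits b m, d ∈ D) ∧ p m)).card := by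
  apply Finset.card_bij (fun n _ => k n)
  · intro n hn
    rw [Finset.mem_filter, Finset.mem_range] at hn
    rw [Finset.mem_filter, Finset.mem_range]
    refine ⟨hk hn.1, ?_, hn.2⟩
    have hr : k n ∈ Set.range k := ⟨n, rfl⟩
    rw [hkr] at hr
    exact hr
  · intro n1 h1 n2 h2 he
    exact hk.injective he
  · intro m hm
    rw [Finset.mem_filter, Finset.mem_range] at hm
    have hr : m ∈ Set.range k := by rw [hkr]; exact hm.2.1
    obtain ⟨n, rfl⟩ := hr
    exact ⟨n, Finset.mem_filter.mpr
      ⟨Finset.mem_range.mpr (hk.lt_iff_lt.mp hm.1), hm.2.2⟩, rfl⟩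

end P7


end Cantor13
/-- `D` is contained in an arithmetic progression of common difference `s`. -/
def InAP (s : ℕ) (D : Finset ℕ) : Prop := ∃ a : ℕ, ∀ d ∈ D, ∃ m : ℕ, d = a + m * s

open Cantor13 Filter in
theorem cantor_uniform_mod_q_iff
    (b : ℕ) (hb : 3 ≤ b) (D : Finset ℕ) (hD : 2 ≤ D.card) (hDb : D.card < b)
    (hDsub : ∀ d ∈ D, d < b) (h0 : 0 ∈ D)
    (k : ℕ → ℕ) (hk : StrictMono k)
    (hkr : Set.range k = {m : ℕ | ∀ d ∈ Nat.digits b m, d ∈ D})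
    (s : ℕ) (hs : InAP s D) (hsmax : ∀ s', InAP s' D → s' ≤ s)
    (q : ℕ) (hqb : Nat.Coprime q b) :
    (∀ a : ℕ, Filter.Tendsto
        (fun N => (((Finset.range N).filter (fun n => k n % q = a % q)).card : ℝ) / (N : ℝ))
        Filter.atTop (nhds (1 / (q : ℝ))))
      ↔ Nat.Coprime q s := by
  classical
  have hb2 : 2 ≤ b := by omega
  have hsg : s = D.gcd id := by
    obtain ⟨a, ha⟩ := hs
    have ha0 : a = 0 := by obtain ⟨m, hm⟩ := ha 0 h0; omega
    subst ha0
    have hsdvd : ∀ d ∈ D, s ∣ d := by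
      intro d hd
      obtain ⟨m, hm⟩ := ha d hd
      exact ⟨m, by rw [hm]; ring⟩
    have h1 : s ∣ D.gcd id := Finset.dvd_gcd (fun d hd => hsdvd d hd)
    have h2 : InAP (D.gcd id) D := by
      refine ⟨0, fun d hd => ?_⟩
      have hgd : D.gcd id ∣ d := Finset.gcd_dvd hd
      exact ⟨d / D.gcd id, by rw [zero_add, Nat.div_mul_cancel hgd]⟩
    have h3 : D.gcd id ≤ s := hsmax _ h2
    have hgpos : 0 < D.gcd id := by
      rcases Nat.eq_zero_or_pos (D.gcd id) with h | h
      · have hall := Finset.gcd_eq_zero_iff.mp h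
        have hsub : D ⊆ {0} := by
          intro d hd
          simp only [Finset.mem_singleton]
          exact hall d hd
        have := Finset.card_le_card hsub
        simp only [Finset.card_singleton] at this
        omega
      · exact h
    have h4 : s ≤ D.gcd id := Nat.le_of_dvd hgpos h1
    omega
  have hq0 : q ≠ 0 := by
    rintro rfl
    rw [Nat.coprime_zero_left] at hqb
    omega
  rcases eq_or_lt_of_le (Nat.one_le_iff_ne_zero.mpr hq0) with hq1 | hq2
  · -- q = 1
    have hq1' : q = 1 := hq1.symm
    subst hq1'
    constructor
    · intro _
      exact Nat.coprime_one_left s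
    · intro _ a
      have heq : ∀ᶠ N : ℕ in atTop,
          (((Finset.range N).filter (fun n => k n % 1 = a % 1)).card : ℝ) / (N : ℝ) = 1 := by
        filter_upwards [eventually_ge_atTop 1] with N hN
        have hfil : (Finset.range N).filter (fun n => k n % 1 = a % 1) = Finset.range N := by
          apply Finset.filter_true_of_mem
          intro x _
          omega
        rw [hfil, Finset.card_range]
        have hne : (N:ℝ) ≠ 0 := by positivity
        field_simp
      have h1 : (1 : ℝ) / ((1:ℕ) : ℝ) = 1 := by norm_num
      rw [h1]
      exact Tendsto.congr' (heq.mono fun N h => h.symm) tendsto_const_nhds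
  · -- q ≥ 2
    haveI : NeZero q := ⟨hq0⟩
    constructor
    · intro H
      by_contra hns
      have hzero : ∀ N, (Finset.range N).filter (fun n => k n % q = 1 % q) = ∅ := by
        intro N
        apply Finset.filter_false_of_mem
        intro n _ hcon
        have hkC : ∀ d ∈ Nat.digits b (k n), d ∈ D := by
          have hr : k n ∈ Set.range k := ⟨n, rfl⟩
          rw [hkr] at hr
          exact hr
        have hsd : s ∣ k n := hsg ▸ gcd_dvd_of_digits hb2 h0 (k n) hkC
        have h1q : 1 % q = 1 := Nat.mod_eq_of_lt (by omega)
        rw [h1q] at hcon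
        have hg1 : Nat.gcd q s ≠ 1 := hns
        have hgq : Nat.gcd q s ∣ q := Nat.gcd_dvd_left _ _
        have hgs : Nat.gcd q s ∣ s := Nat.gcd_dvd_right _ _
        have hgk : Nat.gcd q s ∣ k n := dvd_trans hgs hsd
        have hmod : Nat.gcd q s ∣ k n % q := (Nat.dvd_mod_iff hgq).mpr hgk
        rw [hcon] at hmod
        exact hg1 (Nat.dvd_one.mp hmod)
      have H1 := H 1
      have hzf : (fun N => (((Finset.range N).filter
          (fun n => k n % q = 1 % q)).card : ℝ) / (N : ℝ)) = fun _ => (0:ℝ) := by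
        funext N
        rw [hzero N]
        simp
      rw [hzf] at H1
      have h10 : (1 : ℝ) / (q:ℝ) = 0 := tendsto_nhds_unique H1 tendsto_const_nhds
      have hpos : (0:ℝ) < 1 / (q:ℝ) := by positivity
      linarith
    · intro hqs a
      have hqs' : Nat.Coprime q (D.gcd id) := hsg ▸ hqs
      obtain ⟨L0, hsurj⟩ := exists_surj_level hb2 h0 hDsub hqb hqs'
      set c : ℕ := D.card with hc
      have hc2 : 2 ≤ c := hD
      have hqle : q ≤ c ^ L0 := (contract_key hb2 h0 hDsub hqb hsurj 0 0).1
      set K : ℕ := c ^ L0 - q with hK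
      set G : ℕ → ℝ := fun j => ((Mx b D q j - mnq b D q j : ℕ) : ℝ) with hGdef
      have hGval : ∀ j, G j = ((Mx b D q j - mnq b D q j : ℕ) : ℝ) := fun j => by rw [hGdef]
      have hG0 : ∀ j, 0 ≤ G j := fun j => by rw [hGval]; exact Nat.cast_nonneg _
      have hGcast : ∀ j, G j = (Mx b D q j : ℝ) - (mnq b D q j : ℝ) := by
        intro j
        rw [hGval]
        exact_mod_cast Nat.cast_sub (mnq_le_Mx j)
      have hqR : (0:ℝ) < (q:ℝ) := by
        have : 0 < q := by omega
        exact_mod_cast this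
      have hA : ∀ j (u : ZMod q), |(Acnt b D q j u : ℝ) - (c:ℝ)^j/(q:ℝ)| ≤ G j := by
        intro j u
        have h1 : (mnq b D q j : ℝ) ≤ (Acnt b D q j u : ℝ) := by
          exact_mod_cast mnq_le_Acnt j u
        have h2 : (Acnt b D q j u : ℝ) ≤ (Mx b D q j : ℝ) := by
          exact_mod_cast Acnt_le_Mx j u
        have h3 : (q:ℝ) * (mnq b D q j : ℝ) ≤ (c:ℝ)^j := by
          exact_mod_cast q_mnq_le hb2 h0 hDsub j
        have h4 : (c:ℝ)^j ≤ (q:ℝ) * (Mx b D q j : ℝ) := by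
          exact_mod_cast le_q_Mx hb2 h0 hDsub j
        have hmn : (mnq b D q j : ℝ) ≤ (c:ℝ)^j / (q:ℝ) := by
          rw [le_div_iff₀ hqR]
          linarith
        have hMx : (c:ℝ)^j / (q:ℝ) ≤ (Mx b D q j : ℝ) := by
          rw [div_le_iff₀ hqR]
          linarith
        rw [abs_le, hGcast]
        constructor <;> linarith
      have hGstep : ∀ j, (Mx b D q (j+1) - mnq b D q (j+1) : ℕ)
          ≤ c * (Mx b D q j - mnq b D q j) := by
        intro j
        have h1 := Mx_step hb2 h0 hDsub (q := q) j
        have h2 := mnq_step hb2 h0 hDsub (q := q) j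
        rw [← hc] at h1 h2
        have h3 := Nat.mul_le_mul_left c (mnq_le_Mx (b := b) (D := D) (q := q) j)
        have h4 := mnq_le_Mx (b := b) (D := D) (q := q) (j+1)
        rw [Nat.mul_sub]
        omega
      have hGiter : ∀ i, (Mx b D q (i * L0) - mnq b D q (i * L0) : ℕ) ≤ K ^ i := by
        intro i
        induction i with
        | zero =>
          simp only [Nat.zero_mul, pow_zero]
          have := Mx_zero_le hb2 h0 hDsub (q := q)
          have := mnq_le_Mx (b := b) (D := D) (q := q) 0
          omega
        | succ i ih =>
          have h1 : (i+1) * L0 = i * L0 + L0 := by ring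
          rw [h1, pow_succ]
          calc Mx b D q (i * L0 + L0) - mnq b D q (i * L0 + L0)
              ≤ K * (Mx b D q (i * L0) - mnq b D q (i * L0)) :=
                Gp_contract hb2 h0 hDsub hqb hsurj (i * L0)
          _ ≤ K * K ^ i := Nat.mul_le_mul_left _ ih
          _ = K ^ i * K := by ring
      set γ : ℕ → ℝ := fun j => G j / (c:ℝ)^j with hγdef
      have hγval : ∀ j, γ j = G j / (c:ℝ)^j := fun j => by rw [hγdef]
      have hcpos : ∀ j : ℕ, (0:ℝ) < (c:ℝ)^j := fun j => by positivity
      have hγ0 : ∀ j, 0 ≤ γ j := fun j => by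
        rw [hγval]
        exact div_nonneg (hG0 j) (le_of_lt (hcpos j))
      have hgγ : ∀ j, G j ≤ (c:ℝ)^j * γ j := by
        intro j
        rw [hγval, mul_div_cancel₀ _ (ne_of_gt (hcpos j))]
      have hγanti : ∀ j, γ (j+1) ≤ γ j := by
        intro j
        have h1 : G (j+1) ≤ (c:ℝ) * G j := by
          rw [hGval, hGval]
          calc ((Mx b D q (j+1) - mnq b D q (j+1) : ℕ) : ℝ)
              ≤ ((c * (Mx b D q j - mnq b D q j) : ℕ) : ℝ) := by exact_mod_cast hGstep j
          _ = (c:ℝ) * ((Mx b D q j - mnq b D q j : ℕ) : ℝ) := by push_cast; ring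
        rw [hγval, hγval, div_le_div_iff₀ (hcpos (j+1)) (hcpos j)]
        calc G (j+1) * (c:ℝ)^j ≤ ((c:ℝ) * G j) * (c:ℝ)^j :=
              mul_le_mul_of_nonneg_right h1 (le_of_lt (hcpos j))
        _ = G j * (c:ℝ)^(j+1) := by ring
      have hγmono : Antitone γ := antitone_nat_of_succ_le hγanti
      set β : ℝ := (K:ℝ) / (c:ℝ)^L0 with hβ
      have hβ0 : 0 ≤ β := by
        rw [hβ]
        exact div_nonneg (Nat.cast_nonneg _) (le_of_lt (hcpos L0))
      have hβ1 : β < 1 := by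
        rw [hβ, div_lt_one (hcpos L0)]
        have hKR : (K:ℝ) = ((c ^ L0 : ℕ) : ℝ) - (q:ℝ) := by
          rw [hK]
          exact Nat.cast_sub hqle
        rw [hKR]
        have : ((c ^ L0 : ℕ) : ℝ) = (c:ℝ) ^ L0 := by push_cast; ring
        rw [this]
        linarith
      have hγiter : ∀ i, γ (i * L0) ≤ β ^ i := by
        intro i
        rw [hγval, hβ]
        have h1 : G (i * L0) ≤ ((K:ℝ))^i := by
          rw [hGval]
          calc ((Mx b D q (i * L0) - mnq b D q (i * L0) : ℕ) : ℝ)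
              ≤ ((K ^ i : ℕ) : ℝ) := by exact_mod_cast hGiter i
          _ = ((K:ℝ))^i := by push_cast; ring
        calc G (i * L0) / (c:ℝ)^(i * L0) ≤ ((K:ℝ))^i / (c:ℝ)^(i * L0) := by
              gcongr
        _ = ((K:ℝ) / (c:ℝ)^L0)^i := by
              rw [div_pow, ← pow_mul, Nat.mul_comm]
      have hγtend : Tendsto γ atTop (nhds 0) := by
        rw [Metric.tendsto_atTop]
        intro ε hε
        obtain ⟨i, hi⟩ := ((tendsto_pow_atTop_nhds_zero_of_lt_one hβ0 hβ1).eventually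
          (gt_mem_nhds hε)).exists
        refine ⟨i * L0, fun j hj => ?_⟩
        rw [Real.dist_eq, sub_zero, abs_of_nonneg (hγ0 j)]
        calc γ j ≤ γ (i * L0) := hγmono hj
        _ ≤ β ^ i := hγiter i
        _ < ε := hi
      have hφ := aux_tendsto (c:ℝ) (by exact_mod_cast hc2) G γ hG0 hgγ hγ0 hγtend
      have hcount : ∀ N, ((Finset.range N).filter (fun n => k n % q = a % q)).card
          = Bq b D q (k N) ((a : ℕ) : ZMod q) := by
        intro N
        have h1 : (Finset.range N).filter (fun n => k n % q = a % q)
            = (Finset.range N).filter (fun n => ((k n : ℕ) : ZMod q) = ((a:ℕ) : ZMod q)) := by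
          apply Finset.filter_congr
          intro n _
          rw [ZMod.natCast_eq_natCast_iff]
          exact Iff.rfl
        rw [h1]
        exact count_eq hk hkr N (fun m => ((m : ℕ) : ZMod q) = ((a:ℕ) : ZMod q))
      have hNn : ∀ N, Nn b D (k N) = N := by
        intro N
        have h1 := count_eq hk hkr N (fun _ => True)
        simp only [Finset.filter_true, Finset.card_range, and_true] at h1
        exact h1.symm
      have hkge : ∀ N, N ≤ k N := fun N => hk.le_apply
      set LN : ℕ → ℕ := fun N => Nat.log b (k N) with hLN
      have hLNval : ∀ N, LN N = Nat.log b (k N) := fun N => by rw [hLN]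
      have hNnpow : ∀ L : ℕ, Nn b D (b ^ L) = c ^ L := by
        intro L
        exact card_CF hb2 h0 hDsub L
      have hNnmono : ∀ {X Y : ℕ}, X ≤ Y → Nn b D X ≤ Nn b D Y := by
        intro X Y hXY
        exact Finset.card_le_card (Finset.filter_subset_filter _ (Finset.range_subset_range.mpr hXY))
      have hlow : ∀ N, 1 ≤ N → c ^ (LN N) ≤ N := by
        intro N hN
        have hk0 : k N ≠ 0 := by have := hkge N; omega
        have h1 : b ^ (LN N) ≤ k N := by rw [hLNval]; exact Nat.pow_log_le_self b hk0
        calc c ^ LN N = Nn b D (b ^ LN N) := (hNnpow _).symm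
        _ ≤ Nn b D (k N) := hNnmono h1
        _ = N := hNn N
      have hup : ∀ N, N ≤ c ^ (LN N + 1) := by
        intro N
        have h1 : k N < b ^ (LN N + 1) := by
          rw [hLNval]
          exact Nat.lt_pow_succ_log_self (by omega) (k N)
        calc N = Nn b D (k N) := (hNn N).symm
        _ ≤ Nn b D (b ^ (LN N + 1)) := hNnmono (le_of_lt h1)
        _ = c ^ (LN N + 1) := hNnpow _
      have hLNtend : Tendsto LN atTop atTop := by
        rw [tendsto_atTop]
        intro M
        filter_upwards [eventually_ge_atTop (c ^ (M + 1) + 1)] with N hN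
        have h1 : c ^ (M+1) < c ^ (LN N + 1) := by
          calc c ^ (M+1) < N := by omega
          _ ≤ c ^ (LN N + 1) := hup N
        have h2 := (Nat.pow_lt_pow_iff_right (by omega : 1 < c)).mp h1
        omega
      have hmain := main_est hb2 h0 hDsub (by omega : 0 < q) G hG0 hA
      have hbound : ∀ᶠ N : ℕ in atTop,
          ‖(((Finset.range N).filter (fun n => k n % q = a % q)).card : ℝ) / (N : ℝ)
            - 1 / (q:ℝ)‖
          ≤ (∑ j ∈ Finset.range (LN N + 1), (c:ℝ) * G j) / (c:ℝ) ^ (LN N) := by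
        filter_upwards [eventually_ge_atTop 1] with N hN
        have hNR : (0:ℝ) < (N:ℝ) := by exact_mod_cast (by omega : 0 < N)
        have he : (((Finset.range N).filter (fun n => k n % q = a % q)).card : ℝ) / (N : ℝ)
            - 1 / (q:ℝ)
            = ((Bq b D q (k N) ((a:ℕ) : ZMod q) : ℝ) - (Nn b D (k N) : ℝ)/(q:ℝ)) / (N:ℝ) := by
          rw [hcount N, hNn N]
          field_simp
        rw [Real.norm_eq_abs, he, abs_div, abs_of_pos hNR]
        have h3 : |(Bq b D q (k N) ((a:ℕ):ZMod q) : ℝ) - (Nn b D (k N) : ℝ)/(q:ℝ)|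
            ≤ ∑ j ∈ Finset.range (LN N + 1), (c:ℝ) * G j := by
          rw [hLNval]
          exact hmain (k N) ((a:ℕ) : ZMod q)
        have hcle : ((c:ℝ))^(LN N) ≤ (N:ℝ) := by exact_mod_cast hlow N hN
        have hnum0 : 0 ≤ ∑ j ∈ Finset.range (LN N + 1), (c:ℝ) * G j :=
          Finset.sum_nonneg fun j _ => mul_nonneg (by positivity) (hG0 j)
        calc |(Bq b D q (k N) ((a:ℕ):ZMod q) : ℝ) - (Nn b D (k N) : ℝ)/(q:ℝ)| / (N:ℝ)
            ≤ (∑ j ∈ Finset.range (LN N + 1), (c:ℝ) * G j) / (N:ℝ) := by gcongr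
        _ ≤ (∑ j ∈ Finset.range (LN N + 1), (c:ℝ) * G j) / ((c:ℝ)^(LN N)) := by
            gcongr
      have hsq := squeeze_zero_norm' hbound (hφ.comp hLNtend)
      have hfinal := hsq.add_const (1 / (q:ℝ))
      simp only [sub_add_cancel, zero_add] at hfinal
      exact hfinal
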